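/- Let α ∈ (0,2), ρ ∈ (0,1), ρ̂ = 1 − ρ, with αρ ∈ (0,1) and αρ̂ ∈ (0,1), and suppose α ≠ 1 so that α − 1 ∈ (−1, α) \ {0}. Define the 2×2 matrix F(z) with entries F₁₁(z) = −Γ(α−z)Γ(1+z)/(Γ(αρ̂−z)Γ(1−αρ̂+z)), F₁₂(z) = Γ(α−z)Γ(1+z)/(Γ(αρ̂)Γ(1−αρ̂)), F₂₁(z) = Γ(α−z)Γ(1+z)/(Γ(αρ)Γ(1−αρ)), F₂₂(z) = −Γ(α−z)Γ(1+z)/(Γ(αρ−z)Γ(1−αρ+z)). Then F(α−1) · (sin(παρ̂), sin(παρ))ᵀ = 0, i.e. the vector (sin(παρ̂), sin(παρ)) is a right eigenvector of F(α−1) with eigenvalue 0. -/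

import Mathlib

open Real Matrix

theorem stmt_1 (α ρ ρh : ℝ) (hα : α ∈ Set.Ioo (0:ℝ) 2) (hρ : ρ ∈ Set.Ioo (0:ℝ) 1)
    (hρh : ρh = 1 - ρ) (hαρ : α * ρ ∈ Set.Ioo (0:ℝ) 1) (hαρh : α * ρh ∈ Set.Ioo (0:ℝ) 1)
    (hα1 : α ≠ 1)
    (F : ℝ → Matrix (Fin 2) (Fin 2) ℝ)
    (hF : ∀ z, F z =
      !![ -(Real.Gamma (α - z) * Real.Gamma (1 + z)) /
            (Real.Gamma (α * ρh - z) * Real.Gamma (1 - α * ρh + z)),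
          (Real.Gamma (α - z) * Real.Gamma (1 + z)) /
            (Real.Gamma (α * ρh) * Real.Gamma (1 - α * ρh));
          (Real.Gamma (α - z) * Real.Gamma (1 + z)) /
            (Real.Gamma (α * ρ) * Real.Gamma (1 - α * ρ)),
          -(Real.Gamma (α - z) * Real.Gamma (1 + z)) /
            (Real.Gamma (α * ρ - z) * Real.Gamma (1 - α * ρ + z)) ]) :
    (F (α - 1)).mulVec ![Real.sin (π * (α * ρh)), Real.sin (π * (α * ρ))] = 0 := by
  have e1 : α * ρh - (α - 1) = 1 - α * ρ := by rw [hρh]; ring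
  have e2 : 1 - α * ρh + (α - 1) = α * ρ := by rw [hρh]; ring
  have e3 : α * ρ - (α - 1) = 1 - α * ρh := by rw [hρh]; ring
  have e4 : 1 - α * ρ + (α - 1) = α * ρh := by rw [hρh]; ring
  have h1 : Real.Gamma (α * ρ) * Real.Gamma (1 - α * ρ) = π / Real.sin (π * (α * ρ)) :=
    Real.Gamma_mul_Gamma_one_sub _
  have h2 : Real.Gamma (α * ρh) * Real.Gamma (1 - α * ρh) = π / Real.sin (π * (α * ρh)) :=
    Real.Gamma_mul_Gamma_one_sub _
  have sρ : Real.sin (π * (α * ρ)) ≠ 0 :=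
    ne_of_gt (Real.sin_pos_of_pos_of_lt_pi (mul_pos Real.pi_pos hαρ.1)
      (by nlinarith [hαρ.2, Real.pi_pos]))
  have sρh : Real.sin (π * (α * ρh)) ≠ 0 :=
    ne_of_gt (Real.sin_pos_of_pos_of_lt_pi (mul_pos Real.pi_pos hαρh.1)
      (by nlinarith [hαρh.2, Real.pi_pos]))
  have hπ := Real.pi_ne_zero
  funext i
  fin_cases i <;>
  · simp only [hF, e1, e2, e3, e4, mulVec, Matrix.cons_val', Matrix.cons_val_zero,
      Matrix.cons_val_one, Matrix.head_cons, Matrix.empty_val', Matrix.cons_val_fin_one,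
      Matrix.head_fin_const, dotProduct, Fin.sum_univ_two, Pi.zero_apply,
      Matrix.of_apply, Fin.zero_eta, Fin.mk_one]
    simp only [mul_comm (Real.Gamma (1 - α * ρ)) (Real.Gamma (α * ρ)),
      mul_comm (Real.Gamma (1 - α * ρh)) (Real.Gamma (α * ρh))] <;>
    rw [h1, h2] <;> field_simp <;> ring
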